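/- Let σ₁, …, σ_n be a list of sequences over a finite set A with n ≤ |A| that is forward complete and is also a quasi-palindrome. Then the list is strongly complete. -/

import Mathlib

/-- `ρ ∈ [A]_k`: a sequence over `A` of length `k` with pairwise distinct elements. -/
def DistinctSeq (A : Finset ℕ) (k : ℕ) (ρ : List ℕ) : Prop :=
  ρ.length = k ∧ ρ.Nodup ∧ ∀ a ∈ ρ, a ∈ A

/-- `σ` is `k`-complete over `A`: every member of `[A]_k` is a subsequence of `σ`. -/
def IsKComplete (A : Finset ℕ) (k : ℕ) (σ : List ℕ) : Prop :=
  ∀ ρ : List ℕ, DistinctSeq A k ρ → ρ.Sublist σ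

/-- `σ` is a supersequence over `A`: it contains every permutation of `A` as a
subsequence, i.e. it is `|A|`-complete. -/
def IsSupersequence (A : Finset ℕ) (σ : List ℕ) : Prop :=
  IsKComplete A A.card σ

/-- A list of sequences `σ₁, …, σ_n` is forward complete if for every `1 ≤ k ≤ n`,
the concatenation `σ₁σ₂⋯σ_k` is `k`-complete. -/
def ForwardComplete (A : Finset ℕ) (L : List (List ℕ)) : Prop :=
  ∀ k, 1 ≤ k → k ≤ L.length → IsKComplete A k ((L.take k).flatten)

/-- A list of sequences `σ₁, …, σ_n` is backward complete if for every `1 ≤ k ≤ n`,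
the concatenation `σ_{n-k+1}⋯σ_n` is `k`-complete. -/
def BackwardComplete (A : Finset ℕ) (L : List (List ℕ)) : Prop :=
  ∀ k, 1 ≤ k → k ≤ L.length → IsKComplete A k ((L.drop (L.length - k)).flatten)

/-- Strongly complete: both forward and backward complete. -/
def StronglyComplete (A : Finset ℕ) (L : List (List ℕ)) : Prop :=
  ForwardComplete A L ∧ BackwardComplete A L

/-- A sequence `σ` over `A` is a quasi-palindrome if some bijection `B : A → A`
maps `σ` (elementwise) to its reverse, i.e. `B(σ[k]) = σ[l-k+1]` for all `1 ≤ k ≤ l`. -/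
def QuasiPalindromeSeq (A : Finset ℕ) (σ : List ℕ) : Prop :=
  ∃ B : ℕ → ℕ, Set.BijOn B ↑A ↑A ∧ σ.map B = σ.reverse

/-- A list of sequences `σ₁, …, σ_n` is a quasi-palindrome if the concatenation
`σ₁σ₂⋯σ_n` is a quasi-palindrome and `length σ_k = length σ_{n-k+1}` for all `1 ≤ k ≤ n`. -/
def QuasiPalindromeList (A : Finset ℕ) (L : List (List ℕ)) : Prop :=
  QuasiPalindromeSeq A L.flatten ∧
    ∀ k, 1 ≤ k → k ≤ L.length →
      (L.getD (k-1) []).length = (L.getD (L.length - k) []).length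

/-- **Theorem 3.** A forward complete list of sequences over a finite
set `A` (with `n ≤ |A|`) which is a quasi-palindrome is strongly complete. -/
theorem forwardComplete_quasiPalindrome_stronglyComplete
    (A : Finset ℕ) (L : List (List ℕ)) (hn : L.length ≤ A.card)
    (hover : ∀ σ ∈ L, ∀ a ∈ σ, a ∈ A)
    (hfc : ForwardComplete A L) (hqp : QuasiPalindromeList A L) :
    StronglyComplete A L := by
  refine ⟨hfc, ?_⟩
  intro k hk1 hkn ρ hρ
  obtain ⟨B, hB, hBW⟩ := hqp.1
  set n := L.length with hnL
  -- length of the prefix of k blocks equals length of the suffix of k blocks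
  have hmaps : (L.take k).map List.length = ((L.drop (n - k)).map List.length).reverse := by
    apply List.ext_getElem
    · simp [Nat.sub_sub_self hkn, min_eq_left hkn]; omega
    · intro j h1 h2
      have hjk : j < k := by simp [min_eq_left hkn] at h1; omega
      have hjn : j < n := lt_of_lt_of_le hjk hkn
      have hlen : ((L.drop (n - k)).map List.length).length = k := by
        simp [Nat.sub_sub_self hkn]; omega
      rw [List.getElem_reverse]
      simp only [List.getElem_map, List.getElem_take, List.getElem_drop]
      have hkey := hqp.2 (j + 1) (Nat.le_add_left 1 j) (by omega)
      have e1 : L.getD (j + 1 - 1) [] = L[j] := by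
        rw [List.getD_eq_getElem] <;> simp <;> omega
      have e2 : L.getD (n - (j + 1)) [] = L[n - (j+1)]'(by omega) := by
        rw [List.getD_eq_getElem] <;> simp <;> omega
      rw [e1, e2] at hkey
      have : n - k + (((L.drop (n - k)).map List.length).length - 1 - j) = n - (j + 1) := by
        rw [hlen]; omega
      simp_rw [this]
      exact hkey
  set P : List ℕ := (L.take k).flatten with hP
  set S : List ℕ := (L.drop (n - k)).flatten with hS
  have hlenPS : P.length = S.length := by
    rw [hP, hS, List.length_flatten, List.length_flatten, hmaps, List.sum_reverse]
  -- P is the prefix, S is the suffix of W := L.flatten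
  have hW1 : L.flatten = P ++ (L.drop k).flatten := by
    rw [hP, ← List.flatten_append, List.take_append_drop]
  have hW2 : L.flatten = (L.take (n - k)).flatten ++ S := by
    rw [hS, ← List.flatten_append, List.take_append_drop]
  -- the inverse of B on A
  set g : ℕ → ℕ := Function.invFunOn B ↑A with hg
  have hinv : Set.InvOn g B ↑A ↑A := hB.invOn_invFunOn
  have hgmem : ∀ a ∈ A, g a ∈ A := fun a ha => hB.surjOn.mapsTo_invFunOn ha
  have hBg : ∀ a ∈ A, B (g a) = a := fun a ha => hinv.2 ha
  -- build ρ' and use forward completeness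
  set ρ' : List ℕ := ρ.reverse.map g with hρ'
  obtain ⟨hρlen, hρnd, hρA⟩ := hρ
  have hρ'mem : ∀ a ∈ ρ', a ∈ A := by
    intro a ha
    rw [hρ', List.mem_map] at ha
    obtain ⟨b, hb, rfl⟩ := ha
    exact hgmem b (hρA b (List.mem_reverse.mp hb))
  have hρ'd : DistinctSeq A k ρ' := by
    refine ⟨by simp [hρ', hρlen], ?_, hρ'mem⟩
    refine List.Nodup.map_on ?_ (by simpa using hρnd)
    intro x hx y hy hxy
    have hx' := hρA x (List.mem_reverse.mp hx)
    have hy' := hρA y (List.mem_reverse.mp hy)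
    have := congrArg B hxy
    rwa [hBg x hx', hBg y hy'] at this
  have hsub : ρ'.Sublist P := hfc k hk1 hkn ρ' hρ'd
  have hsub2 : (ρ'.map B).Sublist (P.map B) := hsub.map B
  have hρ'B : ρ'.map B = ρ.reverse := by
    rw [hρ', List.map_map]
    exact (List.map_congr_left fun a ha => hBg a (hρA a (List.mem_reverse.mp ha))).trans
      (List.map_id _)
  -- identify P.map B with S.reverse
  have hPmB : P.map B = S.reverse := by
    have h1 : (L.flatten.map B).take P.length = P.map B := by
      rw [hW1]; simp
    have h2 : L.flatten.reverse.take P.length = S.reverse := by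
      rw [hW2, List.reverse_append, hlenPS, List.take_left' (by simp)]
    rw [← h1, hBW, h2]
  rw [hρ'B, hPmB] at hsub2
  have := hsub2.reverse
  simpa using this
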